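/- Let N ≥ 2 be an integer, let p > 1, m > 0, γ ∈ ℝ and 0 < δ < 1/2. Set β = (m/(p−1))^{1/p} and v(r) = r^{−(N−1)/(p(p−1))}·e^{−βr}·(1 − γ·r^{−δ}) for r > 0. Then there exist R > 0 and a function Q : (R,∞) → ℝ such that for all r > R one has v(r) > 0, v'(r) < 0, and −d/dr(|v'(r)|^{p−2}·v'(r)) − ((N−1)/r)·|v'(r)|^{p−2}·v'(r) + m·v(r)^{p−1} = Q(r)·v(r)^{p−1}, and moreover the function r ↦ Q(r) − Q₀·r^{−(δ+1)} is O(r^{−(2δ+1)}) as r → ∞, where Q₀ = (m/(p−1))^{(p−1)/p}·p·(p−1)·δ·γ. -/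

import Mathlib

open Filter Topology Set Asymptotics

/-- bound for rpow on an interval -/
lemma aux_rpow_le {b q u : ℝ} (hb : 0 < b) (hu : u ∈ Set.Icc (b/2) (b + b/2)) :
    u ^ q ≤ max ((b/2) ^ q) ((b + b/2) ^ q) := by
  obtain ⟨h1, h2⟩ := hu
  rcases le_total 0 q with hq | hq
  · exact le_max_of_le_right (Real.rpow_le_rpow (by linarith) h2 hq)
  · exact le_max_of_le_left (Real.rpow_le_rpow_of_nonpos (by linarith) h1 hq)

/-- Lipschitz bound for rpow on `[b/2, b+b/2]`. -/
lemma aux_rpow_lip {b q : ℝ} (hb : 0 < b) :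
    ∃ M : ℝ, 0 ≤ M ∧ ∀ s ∈ Set.Icc (b/2) (b + b/2), ∀ t ∈ Set.Icc (b/2) (b + b/2),
      |s ^ q - t ^ q| ≤ M * |s - t| := by
  refine ⟨|q| * max ((b/2) ^ (q-1)) ((b + b/2) ^ (q-1)), by positivity, ?_⟩
  intro s hs t ht
  have key := Convex.norm_image_sub_le_of_norm_hasDerivWithin_le
    (f := fun u : ℝ => u ^ q) (f' := fun u : ℝ => q * u ^ (q - 1))
    (s := Set.Icc (b/2) (b + b/2)) (C := |q| * max ((b/2) ^ (q-1)) ((b + b/2) ^ (q-1)))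
    (fun u hu => (Real.hasDerivAt_rpow_const (Or.inl (ne_of_gt (lt_of_lt_of_le (by positivity) hu.1)))).hasDerivWithinAt)
    (fun u hu => by
      have h1 : (0:ℝ) < u := lt_of_lt_of_le (by positivity) hu.1
      have h2 := aux_rpow_le (q := q - 1) hb hu
      have h3 : (0:ℝ) ≤ u ^ (q-1) := (Real.rpow_pos_of_pos h1 _).le
      calc ‖q * u ^ (q-1)‖ = |q| * u ^ (q-1) := by
            rw [norm_mul, Real.norm_eq_abs, Real.norm_eq_abs, abs_of_nonneg h3]
        _ ≤ _ := by
            apply mul_le_mul_of_nonneg_left h2 (abs_nonneg q))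
    (convex_Icc _ _) ht hs
  simpa [Real.norm_eq_abs] using key

/-- Second-order Taylor bound for rpow near a positive point. -/
lemma aux_taylor2 {b p : ℝ} (hb : 0 < b) :
    ∃ K : ℝ, 0 ≤ K ∧ ∀ t : ℝ, |t - b| ≤ b/2 →
      |t ^ p - b ^ p - p * b ^ (p-1) * (t - b)| ≤ K * (t - b)^2 := by
  obtain ⟨M, hM0, hM⟩ := aux_rpow_lip (q := p - 1) hb
  refine ⟨|p| * M, by positivity, ?_⟩
  intro t ht
  have habs := abs_le.mp ht
  have htIcc : t ∈ Set.Icc (b/2) (b + b/2) := ⟨by linarith, by linarith⟩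
  have hbIcc : b ∈ Set.Icc (b/2) (b + b/2) := ⟨by linarith, by linarith⟩
  have hsub : Set.uIcc b t ⊆ Set.Icc (b/2) (b + b/2) := by
    exact Set.uIcc_subset_Icc hbIcc htIcc
  have key := Convex.norm_image_sub_le_of_norm_hasDerivWithin_le
    (f := fun u : ℝ => u ^ p - p * b ^ (p-1) * u)
    (f' := fun u : ℝ => p * u ^ (p - 1) - p * b ^ (p-1))
    (s := Set.uIcc b t) (C := |p| * M * |t - b|)
    (fun u hu => by
      have hu0 : (0:ℝ) < u := lt_of_lt_of_le (by positivity) (hsub hu).1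
      exact ((Real.hasDerivAt_rpow_const (p := p) (Or.inl hu0.ne')).sub
        (((hasDerivAt_id u).const_mul (p * b ^ (p-1))).congr_deriv (by ring))).hasDerivWithinAt)
    (fun u hu => by
      have h1 : |u ^ (p-1) - b ^ (p-1)| ≤ M * |u - b| := hM u (hsub hu) b hbIcc
      have h2 : |u - b| ≤ |t - b| := by
        rcases le_total b t with hbt | hbt
        · rw [Set.uIcc_of_le hbt] at hu
          rw [abs_of_nonneg (by linarith [hu.1]), abs_of_nonneg (by linarith)]
          linarith [hu.2]
        · rw [Set.uIcc_of_ge hbt] at hu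
          rw [abs_of_nonpos (by linarith [hu.2]), abs_of_nonpos (by linarith)]
          linarith [hu.1]
      calc ‖p * u ^ (p-1) - p * b ^ (p-1)‖ = |p| * |u ^ (p-1) - b ^ (p-1)| := by
            rw [Real.norm_eq_abs, ← abs_mul]; ring_nf
        _ ≤ |p| * (M * |u - b|) := mul_le_mul_of_nonneg_left h1 (abs_nonneg p)
        _ ≤ |p| * (M * |t - b|) := by
            apply mul_le_mul_of_nonneg_left (mul_le_mul_of_nonneg_left h2 hM0) (abs_nonneg p)
        _ = |p| * M * |t - b| := by ring)
    (convex_uIcc _ _) Set.left_mem_uIcc Set.right_mem_uIcc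
  have e1 : (t ^ p - p * b ^ (p-1) * t) - (b ^ p - p * b ^ (p-1) * b)
      = t ^ p - b ^ p - p * b ^ (p-1) * (t - b) := by ring
  rw [Real.norm_eq_abs, Real.norm_eq_abs, e1] at key
  calc |t ^ p - b ^ p - p * b ^ (p-1) * (t - b)| ≤ |p| * M * |t - b| * |t - b| := key
    _ = |p| * M * (t - b)^2 := by rw [mul_assoc, abs_mul_abs_self]; ring

set_option maxHeartbeats 1000000 in
theorem stmt_12
    (N : ℕ) (hN : 2 ≤ N) (p m γ δ : ℝ)
    (hp : 1 < p) (hm : 0 < m) (hδ : 0 < δ ∧ δ < 1 / 2)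
    (β : ℝ) (hβ : β = (m / (p - 1)) ^ ((1 : ℝ) / p))
    (v : ℝ → ℝ)
    (hv : ∀ r : ℝ, 0 < r →
      v r = r ^ (-(((N : ℝ) - 1) / (p * (p - 1)))) * Real.exp (-β * r) *
        (1 - γ * r ^ (-δ))) :
    ∃ R : ℝ, 0 < R ∧ ∃ Q : ℝ → ℝ,
      (∀ r : ℝ, R < r →
        0 < v r ∧ deriv v r < 0 ∧
        -(deriv (fun s : ℝ => |deriv v s| ^ (p - 2) * deriv v s) r)
            - (((N : ℝ) - 1) / r) * (|deriv v r| ^ (p - 2) * deriv v r)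
            + m * v r ^ (p - 1)
          = Q r * v r ^ (p - 1)) ∧
      (fun r : ℝ =>
          Q r - (m / (p - 1)) ^ ((p - 1) / p) * p * (p - 1) * δ * γ * r ^ (-(δ + 1)))
        =O[atTop] fun r : ℝ => r ^ (-(2 * δ + 1)) := by
  obtain ⟨hδ1, hδ2⟩ := hδ
  have hp1 : 0 < p - 1 := by linarith
  have hp0 : 0 < p := by linarith
  have hx0 : 0 < m / (p - 1) := div_pos hm hp1
  have hb : 0 < β := hβ ▸ Real.rpow_pos_of_pos hx0 _
  obtain ⟨a, ha⟩ : ∃ x : ℝ, x = ((N : ℝ) - 1) / (p * (p - 1)) :=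
    ⟨((N : ℝ) - 1) / (p * (p - 1)), rfl⟩
  rw [show (((N : ℝ) - 1) / (p * (p - 1))) = a from ha.symm] at hv
  have hN1 : (1:ℝ) ≤ (N:ℝ) - 1 := by
    have : (2:ℝ) ≤ (N:ℝ) := by exact_mod_cast hN
    linarith
  have hpp1 : 0 < p * (p - 1) := by positivity
  have ha0 : 0 ≤ a := by rw [ha]; exact div_nonneg (by linarith) hpp1.le
  have haN : p * (p - 1) * a = (N:ℝ) - 1 := by
    rw [ha]; field_simp
  obtain ⟨h, hh_def⟩ : ∃ f : ℝ → ℝ, f = fun r => 1 - γ * r ^ (-δ) := ⟨_, rfl⟩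
  obtain ⟨g, hg_def⟩ : ∃ f : ℝ → ℝ, f = fun r => β + a * r⁻¹ - γ * δ * r ^ (-δ - 1) / h r :=
    ⟨_, rfl⟩
  obtain ⟨g1, hg1_def⟩ : ∃ f : ℝ → ℝ, f = fun r => a * (-(r ^ 2)⁻¹) -
      (γ * δ * ((-δ - 1) * r ^ (-δ - 1 - 1)) * h r -
        γ * δ * r ^ (-δ - 1) * (γ * δ * r ^ (-δ - 1))) / (h r) ^ 2 := ⟨_, rfl⟩
  -- tendsto facts
  have ht1 : Tendsto (fun r : ℝ => r ^ (-δ)) atTop (𝓝 0) := tendsto_rpow_neg_atTop hδ1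
  have ht2 : Tendsto (fun r : ℝ => r ^ (-δ - 1)) atTop (𝓝 0) := by
    simpa [show -(δ+1) = -δ-1 by ring] using tendsto_rpow_neg_atTop (by linarith : (0:ℝ) < δ + 1)
  have hth : Tendsto h atTop (𝓝 1) := by
    have h1 := ht1.const_mul γ
    rw [mul_zero] at h1
    have := tendsto_const_nhds (x := (1:ℝ)) (f := atTop) |>.sub h1
    rw [hh_def]
    simpa using this
  have htg : Tendsto g atTop (𝓝 β) := by
    have h1 : Tendsto (fun r:ℝ => a * r⁻¹) atTop (𝓝 0) := by
      simpa using tendsto_inv_atTop_zero.const_mul a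
    have h2 : Tendsto (fun r:ℝ => γ * δ * r ^ (-δ-1) / h r) atTop (𝓝 0) := by
      have := (ht2.const_mul (γ*δ)).div hth one_ne_zero
      simpa using (show Tendsto (fun r:ℝ => γ * δ * r ^ (-δ-1) / h r) atTop (𝓝 ((γ*δ*0)/1)) from this)
    have := (tendsto_const_nhds (x := β) (f := atTop)).add h1 |>.sub h2
    rw [hg_def]
    simpa using this
  have hev : ∀ᶠ r : ℝ in atTop, 1 < r ∧ |γ| * r ^ (-δ) ≤ 1/2 ∧ |g r - β| < β/2 := by
    have e2 : ∀ᶠ r : ℝ in atTop, |γ| * r ^ (-δ) ≤ 1/2 := by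
      have h0 := ht1.const_mul |γ|
      rw [mul_zero] at h0
      exact h0.eventually (eventually_le_nhds (by norm_num))
    have e3 : ∀ᶠ r : ℝ in atTop, |g r - β| < β/2 := by
      have := Metric.tendsto_nhds.mp htg (β/2) (by positivity)
      simpa [Real.dist_eq] using this
    filter_upwards [eventually_gt_atTop 1, e2, e3] with r h1 h2 h3 using ⟨h1,h2,h3⟩
  obtain ⟨R₀, hR₀⟩ := eventually_atTop.mp hev
  obtain ⟨R, hRdef⟩ : ∃ x : ℝ, x = max R₀ 1 := ⟨_, rfl⟩
  refine ⟨R, by rw [hRdef]; exact lt_of_lt_of_le one_pos (le_max_right _ _), ?_⟩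
  -- pointwise basic facts
  have key : ∀ r : ℝ, R < r → 1 < r ∧ 1/2 ≤ h r ∧ h r ≤ 3/2 ∧ |g r - β| < β/2 ∧
      0 < v r ∧ v r = r ^ (-a) * Real.exp (-β*r) * h r := by
    intro r hr
    rw [hRdef] at hr
    have hr1 : 1 < r := lt_of_le_of_lt (le_max_right R₀ 1) hr
    have hr0 : 0 < r := by linarith
    obtain ⟨-, h2, h3⟩ := hR₀ r (le_of_lt (lt_of_le_of_lt (le_max_left R₀ 1) hr))
    have habs : |γ * r ^ (-δ)| ≤ 1/2 := by
      rw [abs_mul, abs_of_nonneg (Real.rpow_nonneg hr0.le _)]; exact h2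
    obtain ⟨hγ1, hγ2⟩ := abs_le.mp habs
    have hh1 : 1/2 ≤ h r := by simp only [hh_def]; linarith
    have hh2 : h r ≤ 3/2 := by simp only [hh_def]; linarith
    have hv' : v r = r ^ (-a) * Real.exp (-β*r) * h r := by
      simp only [hh_def]; exact hv r hr0
    have hvpos : 0 < v r := by
      rw [hv']
      exact mul_pos (mul_pos (Real.rpow_pos_of_pos hr0 _) (Real.exp_pos _))
        (lt_of_lt_of_le (by norm_num) hh1)
    exact ⟨hr1, hh1, hh2, h3, hvpos, hv'⟩
  have hgpos : ∀ r : ℝ, R < r → β/2 ≤ g r ∧ g r ≤ β + β/2 := by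
    intro r hr
    obtain ⟨-, -, -, h3, -, -⟩ := key r hr
    obtain ⟨e1, e2⟩ := abs_lt.mp h3
    exact ⟨by linarith, by linarith⟩
  -- derivative of v
  have hD : ∀ r : ℝ, R < r → HasDerivAt v (-(v r * g r)) r := by
    intro r hr
    obtain ⟨hr1, hh1, hh2, -, -, hv'⟩ := key r hr
    have hr0 : 0 < r := by linarith
    have hhne : h r ≠ 0 := ne_of_gt (lt_of_lt_of_le (by norm_num) hh1)
    have hev' : v =ᶠ[𝓝 r] fun s => s ^ (-a) * Real.exp (-β*s) * h s := by
      filter_upwards [Ioi_mem_nhds hr0] with s hs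
      simp only [hh_def]; exact hv s hs
    have hd1 : HasDerivAt (fun s:ℝ => s ^ (-a)) (-a * r ^ (-a-1)) r :=
      Real.hasDerivAt_rpow_const (Or.inl hr0.ne')
    have hd2 : HasDerivAt (fun s:ℝ => Real.exp (-β*s)) (Real.exp (-β*r) * (-β)) r := by
      have h0 := ((hasDerivAt_id r).const_mul (-β)).exp
      simpa using h0
    have hd3 : HasDerivAt h (γ * δ * r ^ (-δ-1)) r := by
      have hrp : HasDerivAt (fun s:ℝ => s ^ (-δ)) (-δ * r ^ (-δ-1)) r :=
        Real.hasDerivAt_rpow_const (Or.inl hr0.ne')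
      have h0 := (hrp.const_mul γ).const_sub 1
      rw [hh_def]
      exact h0.congr_deriv (by ring)
    have hd := (hd1.mul hd2).mul hd3
    have hfinal := hd.congr_of_eventuallyEq hev'
    refine hfinal.congr_deriv ?_
    have hsplit : r ^ (-a-1) = r ^ (-a) * r⁻¹ := by
      rw [show -a-1 = -a + (-1) by ring, Real.rpow_add hr0, Real.rpow_neg_one]
    rw [hv', hg_def, hsplit]
    simp only [Pi.mul_apply]
    field_simp
    ring
  -- derivative of g
  have hDg : ∀ r : ℝ, R < r → HasDerivAt g (g1 r) r := by
    intro r hr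
    obtain ⟨hr1, hh1, hh2, -, -, -⟩ := key r hr
    have hr0 : 0 < r := by linarith
    have hhne : h r ≠ 0 := ne_of_gt (lt_of_lt_of_le (by norm_num) hh1)
    have hd3 : HasDerivAt h (γ * δ * r ^ (-δ-1)) r := by
      have hrp : HasDerivAt (fun s:ℝ => s ^ (-δ)) (-δ * r ^ (-δ-1)) r :=
        Real.hasDerivAt_rpow_const (Or.inl hr0.ne')
      have h0 := (hrp.const_mul γ).const_sub 1
      rw [hh_def]
      exact h0.congr_deriv (by ring)
    have hd4 : HasDerivAt (fun s:ℝ => γ * δ * s ^ (-δ-1)) (γ * δ * ((-δ-1) * r ^ (-δ-1-1))) r :=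
      (Real.hasDerivAt_rpow_const (Or.inl hr0.ne')).const_mul (γ*δ)
    have hd5 : HasDerivAt (fun s:ℝ => a * s⁻¹) (a * (-(r^2)⁻¹)) r :=
      (hasDerivAt_inv hr0.ne').const_mul a
    have hdiv := hd4.div hd3 hhne
    have h0 := ((hasDerivAt_const r β).add hd5).sub hdiv
    rw [hg_def, hg1_def]
    exact h0.congr_deriv (by ring)
  -- the function Q
  refine ⟨fun r => m + (p-1) * g r ^ (p-2) * (g1 r - g r * g r) +
      (((N:ℝ)-1)/r) * g r ^ (p-1), ?_, ?_⟩
  · -- the equation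
    intro r hr
    obtain ⟨hr1, hh1, hh2, h3, hvpos, hv'⟩ := key r hr
    obtain ⟨hg1', hg2'⟩ := hgpos r hr
    have hr0 : 0 < r := by linarith
    have hgp : 0 < g r := lt_of_lt_of_le (half_pos hb) hg1'
    have hdv := hD r hr
    have hdvderiv : deriv v r = -(v r * g r) := hdv.deriv
    have hvg : 0 < v r * g r := mul_pos hvpos hgp
    refine ⟨hvpos, by rw [hdvderiv]; exact neg_lt_zero.mpr hvg, ?_⟩
    have hwev : (fun s : ℝ => |deriv v s| ^ (p-2) * deriv v s)
        =ᶠ[𝓝 r] (fun s => -((v s * g s) ^ (p-1))) := by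
      filter_upwards [Ioi_mem_nhds hr] with s hs
      have hss : R < s := hs
      obtain ⟨hs1, -, -, -, hvs, -⟩ := key s hss
      obtain ⟨hgs1, -⟩ := hgpos s hss
      have hgs : 0 < g s := lt_of_lt_of_le (half_pos hb) hgs1
      have hvgs : 0 < v s * g s := mul_pos hvs hgs
      have hds : deriv v s = -(v s * g s) := (hD s hss).deriv
      rw [hds, abs_neg, abs_of_pos hvgs]
      rw [show (v s * g s) ^ (p-2) * -(v s * g s) = -((v s * g s)^(p-2) * (v s * g s)) by ring,
        ← Real.rpow_add_one hvgs.ne' (p-2), show p-2+1 = p-1 by ring]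
    have hy : HasDerivAt (fun s => v s * g s) (-(v r * g r) * g r + v r * g1 r) r :=
      hdv.mul (hDg r hr)
    have hw : HasDerivAt (fun s => -((v s * g s) ^ (p-1)))
        (-((-(v r * g r) * g r + v r * g1 r) * (p-1) * (v r * g r) ^ (p-1-1))) r :=
      (hy.rpow_const (Or.inl hvg.ne')).neg
    have hderivw : deriv (fun s : ℝ => |deriv v s| ^ (p-2) * deriv v s) r
        = -((-(v r * g r) * g r + v r * g1 r) * (p-1) * (v r * g r) ^ (p-1-1)) := by
      rw [hwev.deriv_eq]; exact hw.deriv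
    rw [hderivw, hdvderiv, abs_neg, abs_of_pos hvg]
    rw [show p-1-1 = p-2 by ring]
    rw [Real.mul_rpow hvpos.le hgp.le]
    have hvv : v r ^ (p-1) = v r ^ (p-2) * v r := by
      rw [show p-1 = p-2+1 by ring]; exact Real.rpow_add_one hvpos.ne' (p-2)
    have hgg : g r ^ (p-1) = g r ^ (p-2) * g r := by
      rw [show p-1 = p-2+1 by ring]; exact Real.rpow_add_one hgp.ne' (p-2)
    beta_reduce
    rw [hvv, hgg]
    ring
  · -- the asymptotics
    obtain ⟨K, hK0, hK⟩ := aux_taylor2 (p := p) hb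
    obtain ⟨M, hM0, hM⟩ := aux_rpow_lip (q := p - 1) hb
    have hβIcc : β ∈ Set.Icc (β/2) (β + β/2) := ⟨by linarith, by linarith⟩
    obtain ⟨Mg, hMgdef⟩ : ∃ x : ℝ, x = max ((β/2) ^ (p-2)) ((β + β/2) ^ (p-2)) := ⟨_, rfl⟩
    have hMg0 : (0:ℝ) ≤ Mg := by
      rw [hMgdef]
      exact le_trans (Real.rpow_pos_of_pos (by linarith) _).le (le_max_left _ _)
    obtain ⟨Q₀, hQ₀def⟩ : ∃ x : ℝ, x = (m / (p - 1)) ^ ((p - 1) / p) * p * (p - 1) * δ * γ :=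
      ⟨_, rfl⟩
    rw [show ((m / (p - 1)) ^ ((p - 1) / p) * p * (p - 1) * δ * γ) = Q₀ from hQ₀def.symm]
    have hQ0β : (m / (p - 1)) ^ ((p - 1) / p) = β ^ (p-1) := by
      rw [hβ, ← Real.rpow_mul hx0.le]
      congr 1
      field_simp
    have hmb : m = (p-1) * β ^ p := by
      rw [hβ, ← Real.rpow_mul hx0.le, one_div, inv_mul_cancel₀ (ne_of_gt hp0), Real.rpow_one]
      field_simp
    obtain ⟨C1, hC1def⟩ : ∃ x : ℝ, x = a + 2 * (|γ| * δ) := ⟨_, rfl⟩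
    have hC10 : (0:ℝ) ≤ C1 := by
      rw [hC1def]
      exact add_nonneg ha0 (mul_nonneg (by norm_num) (mul_nonneg (abs_nonneg γ) hδ1.le))
    obtain ⟨C2, hC2def⟩ : ∃ x : ℝ, x = a + 6 * (|γ| * δ * (δ+1)) + 4 * (γ*δ)^2 := ⟨_, rfl⟩
    rw [Asymptotics.isBigO_iff]
    refine ⟨(p-1) * (K * C1^2) + (p-1) * (Mg * C2) + ((N:ℝ)-1) * (M * C1) + |Q₀ * γ| * 2, ?_⟩
    filter_upwards [eventually_gt_atTop R] with r hr
    obtain ⟨hr1, hh1, hh2, h3, hvpos, hv'⟩ := key r hr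
    obtain ⟨hg1', hg2'⟩ := hgpos r hr
    have hr0 : 0 < r := by linarith
    have hhpos : 0 < h r := lt_of_lt_of_le (by norm_num) hh1
    have hhne : h r ≠ 0 := ne_of_gt hhpos
    have hgp : 0 < g r := lt_of_lt_of_le (half_pos hb) hg1'
    have hgIcc : g r ∈ Set.Icc (β/2) (β + β/2) := ⟨hg1', hg2'⟩
    have hgp2 : (0:ℝ) ≤ g r ^ (p-2) := (Real.rpow_pos_of_pos hgp _).le
    have hP0 : 0 < r ^ (-(2*δ+1)) := Real.rpow_pos_of_pos hr0 _
    have e_inv : r⁻¹ = r ^ (-1 : ℝ) := (Real.rpow_neg_one r).symm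
    have hinv0 : (0:ℝ) < r⁻¹ := inv_pos.mpr hr0
    have hb1 : r ^ (-δ-1) ≤ r⁻¹ := by
      rw [e_inv]; exact Real.rpow_le_rpow_of_exponent_le hr1.le (by linarith)
    have hb2 : r⁻¹ * r⁻¹ ≤ r ^ (-(2*δ+1)) := by
      rw [e_inv, ← Real.rpow_add hr0]
      exact Real.rpow_le_rpow_of_exponent_le hr1.le (by linarith)
    have hb3 : r ^ (-δ-1-1) ≤ r ^ (-(2*δ+1)) :=
      Real.rpow_le_rpow_of_exponent_le hr1.le (by linarith)
    have hb4 : r ^ (-δ-1) * r ^ (-δ-1) ≤ r ^ (-(2*δ+1)) := by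
      rw [← Real.rpow_add hr0]
      exact Real.rpow_le_rpow_of_exponent_le hr1.le (by linarith)
    have hb5 : r ^ (-δ) * r ^ (-(δ+1)) = r ^ (-(2*δ+1)) := by
      rw [← Real.rpow_add hr0]; congr 1; ring
    have hb6 : (r^2)⁻¹ = r⁻¹ * r⁻¹ := by rw [sq, mul_inv]
    have hd10 : (0:ℝ) ≤ r ^ (-δ-1) := (Real.rpow_pos_of_pos hr0 _).le
    have hd20 : (0:ℝ) ≤ r ^ (-δ-1-1) := (Real.rpow_pos_of_pos hr0 _).le
    have hd00 : (0:ℝ) ≤ r ^ (-δ) := (Real.rpow_pos_of_pos hr0 _).le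
    -- epsilon bound
    have hεeq : g r - β = a * r⁻¹ - γ * δ * r ^ (-δ-1) / h r := by
      simp only [hg_def]; ring
    have hε : |g r - β| ≤ C1 * r⁻¹ := by
      rw [hεeq]
      have t1 : |a * r⁻¹| = a * r⁻¹ := abs_of_nonneg (by positivity)
      have t2 : |γ * δ * r ^ (-δ-1) / h r| ≤ |γ| * δ * r ^ (-δ-1) * 2 := by
        rw [abs_div, abs_of_pos hhpos, abs_mul, abs_mul, abs_of_pos hδ1,
          abs_of_nonneg hd10, div_le_iff₀ hhpos]
        have hnn : (0:ℝ) ≤ |γ| * δ * r ^ (-δ-1) :=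
          mul_nonneg (mul_nonneg (abs_nonneg γ) hδ1.le) hd10
        nlinarith only [hnn, hh1]
      have t3 : |γ| * δ * r ^ (-δ-1) ≤ |γ| * δ * r⁻¹ :=
        mul_le_mul_of_nonneg_left hb1 (by positivity)
      calc |a * r⁻¹ - γ * δ * r ^ (-δ-1) / h r|
          ≤ |a * r⁻¹| + |γ * δ * r ^ (-δ-1) / h r| := abs_sub _ _
        _ ≤ a * r⁻¹ + |γ| * δ * r ^ (-δ-1) * 2 := by rw [t1]; linarith only [t2]
        _ ≤ C1 * r⁻¹ := by rw [hC1def]; linarith only [t3]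
    have hε2 : (g r - β)^2 ≤ C1^2 * (r⁻¹ * r⁻¹) := by
      have h0 := abs_nonneg (g r - β)
      nlinarith only [hε, sq_abs (g r - β), h0, hinv0, hC10]
    -- Taylor term
    have hT : |g r ^ p - β ^ p - p * β^(p-1) * (g r - β)| ≤ K * (g r - β)^2 := hK (g r) h3.le
    -- Lipschitz term
    have hL : |g r ^ (p-1) - β ^ (p-1)| ≤ M * |g r - β| := hM (g r) hgIcc β hβIcc
    have hMgb : g r ^ (p-2) ≤ Mg := by rw [hMgdef]; exact aux_rpow_le hb hgIcc
    -- g1 bound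
    have hg1b : |g1 r| ≤ C2 * r ^ (-(2*δ+1)) := by
      have fA : |γ * δ * ((-δ-1) * r ^ (-δ-1-1))| = |γ| * δ * ((δ+1) * r ^ (-δ-1-1)) := by
        rw [abs_mul, abs_mul, abs_mul, abs_of_pos hδ1, abs_of_nonneg hd20,
          show (-δ-1 : ℝ) = -(δ+1) by ring, abs_neg, abs_of_pos (by linarith : (0:ℝ) < δ+1)]
      have fB : |γ * δ * r ^ (-δ-1)| = |γ| * δ * r ^ (-δ-1) := by
        rw [abs_mul, abs_mul, abs_of_pos hδ1, abs_of_nonneg hd10]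
      have fnum : |γ * δ * ((-δ-1) * r ^ (-δ-1-1)) * h r -
          γ * δ * r ^ (-δ-1) * (γ * δ * r ^ (-δ-1))|
          ≤ |γ| * δ * ((δ+1) * r ^ (-δ-1-1)) * (3/2) + (|γ| * δ * r ^ (-δ-1))^2 := by
        have u1 := abs_sub (γ * δ * ((-δ-1) * r ^ (-δ-1-1)) * h r)
          (γ * δ * r ^ (-δ-1) * (γ * δ * r ^ (-δ-1)))
        have u2 : |γ * δ * ((-δ-1) * r ^ (-δ-1-1)) * h r|
            ≤ |γ| * δ * ((δ+1) * r ^ (-δ-1-1)) * (3/2) := by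
          rw [abs_mul, fA, abs_of_pos hhpos]
          have hnn2 : (0:ℝ) ≤ |γ| * δ * ((δ+1) * r ^ (-δ-1-1)) :=
            mul_nonneg (mul_nonneg (abs_nonneg γ) hδ1.le)
              (mul_nonneg (by linarith only [hδ1]) hd20)
          nlinarith only [hnn2, hh2]
        have u3 : |γ * δ * r ^ (-δ-1) * (γ * δ * r ^ (-δ-1))| = (|γ| * δ * r ^ (-δ-1))^2 := by
          rw [abs_mul, fB]; ring
        linarith
      have hh4 : (1:ℝ)/4 ≤ h r ^ 2 := by nlinarith only [hh1]
      have hhsq : (0:ℝ) < h r ^ 2 := by positivity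
      have step : |g1 r| ≤ a * (r^2)⁻¹ + (|γ| * δ * ((δ+1) * r ^ (-δ-1-1)) * (3/2)
          + (|γ| * δ * r ^ (-δ-1))^2) * 4 := by
        simp only [hg1_def]
        have u0 := abs_sub (a * -(r ^ 2)⁻¹)
          ((γ * δ * ((-δ-1) * r ^ (-δ-1-1)) * h r -
            γ * δ * r ^ (-δ-1) * (γ * δ * r ^ (-δ-1))) / h r ^ 2)
        have u1 : |a * -(r ^ 2)⁻¹| = a * (r^2)⁻¹ := by
          rw [abs_mul, abs_neg, abs_of_nonneg ha0, abs_of_nonneg (by positivity)]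
        have u2 : |(γ * δ * ((-δ-1) * r ^ (-δ-1-1)) * h r -
            γ * δ * r ^ (-δ-1) * (γ * δ * r ^ (-δ-1))) / h r ^ 2|
            ≤ (|γ| * δ * ((δ+1) * r ^ (-δ-1-1)) * (3/2) + (|γ| * δ * r ^ (-δ-1))^2) * 4 := by
          rw [abs_div, abs_of_pos hhsq, div_le_iff₀ hhsq]
          have hnn : (0:ℝ) ≤ |γ| * δ * ((δ+1) * r ^ (-δ-1-1)) * (3/2)
              + (|γ| * δ * r ^ (-δ-1))^2 := by
            have := mul_nonneg (mul_nonneg (abs_nonneg γ) hδ1.le)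
              (mul_nonneg (by linarith only [hδ1] : (0:ℝ) ≤ δ + 1) hd20)
            nlinarith only [this, sq_nonneg (|γ| * δ * r ^ (-δ-1))]
          nlinarith only [fnum, hh4, hnn]
        linarith
      have e1 : a * (r^2)⁻¹ ≤ a * r ^ (-(2*δ+1)) := by
        rw [hb6]; exact mul_le_mul_of_nonneg_left hb2 ha0
      have e2 : |γ| * δ * ((δ+1) * r ^ (-δ-1-1)) * (3/2)
          ≤ (3/2) * (|γ| * δ * (δ+1)) * r ^ (-(2*δ+1)) := by
        have hnn : (0:ℝ) ≤ (3/2) * (|γ| * δ * (δ+1)) :=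
          mul_nonneg (by norm_num) (mul_nonneg (mul_nonneg (abs_nonneg γ) hδ1.le)
            (by linarith only [hδ1]))
        calc |γ| * δ * ((δ+1) * r ^ (-δ-1-1)) * (3/2)
            = (3/2) * (|γ| * δ * (δ+1)) * r ^ (-δ-1-1) := by ring
          _ ≤ (3/2) * (|γ| * δ * (δ+1)) * r ^ (-(2*δ+1)) :=
              mul_le_mul_of_nonneg_left hb3 hnn
      have e3 : (|γ| * δ * r ^ (-δ-1))^2 ≤ (γ*δ)^2 * r ^ (-(2*δ+1)) := by
        have : (|γ| * δ * r ^ (-δ-1))^2 = (|γ| * δ)^2 * (r ^ (-δ-1) * r ^ (-δ-1)) := by ring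
        rw [this, show (abs γ * δ)^2 = (γ*δ)^2 by rw [mul_pow, mul_pow, sq_abs]]
        exact mul_le_mul_of_nonneg_left hb4 (sq_nonneg _)
      calc |g1 r| ≤ a * (r^2)⁻¹ + (|γ| * δ * ((δ+1) * r ^ (-δ-1-1)) * (3/2)
            + (|γ| * δ * r ^ (-δ-1))^2) * 4 := step
        _ ≤ C2 * r ^ (-(2*δ+1)) := by rw [hC2def]; linarith only [e1, e2, e3]
    -- the algebraic identity
    have hgp_eq : g r ^ p = g r ^ (p-2) * g r * g r := by
      have e : (p-2)+1+1 = p := by ring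
      calc g r ^ p = g r ^ ((p-2)+1+1) := by rw [e]
        _ = g r ^ ((p-2)+1) * g r := Real.rpow_add_one hgp.ne' _
        _ = g r ^ (p-2) * g r * g r := by rw [Real.rpow_add_one hgp.ne']
    have hee : r ^ (-(δ+1)) = r ^ (-δ-1) := by congr 1; ring
    have hhne' : 1 - γ * r ^ (-δ) ≠ 0 := by
      simp only [hh_def] at hhne; exact hhne
    have hid : (m + (p-1) * g r ^ (p-2) * (g1 r - g r * g r) + (((N:ℝ)-1)/r) * g r ^ (p-1))
          - Q₀ * r ^ (-(δ+1))
        = -((p-1) * (g r ^ p - β ^ p - p * β^(p-1) * (g r - β)))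
          + (p-1) * g r ^ (p-2) * g1 r
          + (((N:ℝ)-1)/r) * (g r ^ (p-1) - β ^ (p-1))
          + Q₀ * γ * (r ^ (-δ) * r ^ (-(δ+1))) / h r := by
      rw [hee, hgp_eq, hεeq, hQ₀def, hQ0β, hmb, ← haN]
      simp only [hh_def]
      field_simp
      ring
    -- final assembly
    rw [Real.norm_eq_abs, Real.norm_eq_abs, abs_of_pos hP0]
    beta_reduce
    rw [hid]
    obtain ⟨w, hwdef⟩ : ∃ x : ℝ, x = -((p-1) * (g r ^ p - β ^ p - p * β^(p-1) * (g r - β))) :=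
      ⟨_, rfl⟩
    obtain ⟨x, hxdef⟩ : ∃ u : ℝ, u = (p-1) * g r ^ (p-2) * g1 r := ⟨_, rfl⟩
    obtain ⟨y, hydef⟩ : ∃ u : ℝ, u = (((N:ℝ)-1)/r) * (g r ^ (p-1) - β ^ (p-1)) := ⟨_, rfl⟩
    obtain ⟨z, hzdef⟩ : ∃ u : ℝ, u = Q₀ * γ * (r ^ (-δ) * r ^ (-(δ+1))) / h r := ⟨_, rfl⟩
    rw [← hwdef, ← hxdef, ← hydef, ← hzdef]
    have tri : |w + x + y + z| ≤ |w| + |x| + |y| + |z| := by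
      have t1 := abs_add_le (w + x + y) z
      have t2 := abs_add_le (w + x) y
      have t3 := abs_add_le w x
      linarith only [t1, t2, t3]
    have bw : |w| ≤ (p-1) * (K * C1^2) * r ^ (-(2*δ+1)) := by
      rw [hwdef, abs_neg, abs_mul, abs_of_pos hp1]
      have : |g r ^ p - β ^ p - p * β^(p-1) * (g r - β)| ≤ K * (C1^2 * (r⁻¹ * r⁻¹)) := by
        calc |g r ^ p - β ^ p - p * β^(p-1) * (g r - β)| ≤ K * (g r - β)^2 := hT
          _ ≤ K * (C1^2 * (r⁻¹ * r⁻¹)) := mul_le_mul_of_nonneg_left hε2 hK0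
      calc (p-1) * |g r ^ p - β ^ p - p * β^(p-1) * (g r - β)|
          ≤ (p-1) * (K * (C1^2 * (r⁻¹ * r⁻¹))) := mul_le_mul_of_nonneg_left this hp1.le
        _ = (p-1) * (K * C1^2) * (r⁻¹ * r⁻¹) := by ring
        _ ≤ (p-1) * (K * C1^2) * r ^ (-(2*δ+1)) := mul_le_mul_of_nonneg_left hb2
            (mul_nonneg hp1.le (mul_nonneg hK0 (sq_nonneg C1)))
    have bx : |x| ≤ (p-1) * (Mg * C2) * r ^ (-(2*δ+1)) := by
      rw [hxdef, abs_mul, abs_mul, abs_of_pos hp1, abs_of_nonneg hgp2]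
      calc (p-1) * g r ^ (p-2) * |g1 r| ≤ (p-1) * Mg * (C2 * r ^ (-(2*δ+1))) := by
            apply mul_le_mul (mul_le_mul_of_nonneg_left hMgb hp1.le) hg1b (abs_nonneg _)
            positivity
        _ = (p-1) * (Mg * C2) * r ^ (-(2*δ+1)) := by ring
    have by' : |y| ≤ ((N:ℝ)-1) * (M * C1) * r ^ (-(2*δ+1)) := by
      rw [hydef, abs_mul, abs_div, abs_of_pos hr0, abs_of_nonneg (by linarith : (0:ℝ) ≤ (N:ℝ)-1)]
      have u1 : |g r ^ (p-1) - β ^ (p-1)| ≤ M * (C1 * r⁻¹) := by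
        calc |g r ^ (p-1) - β ^ (p-1)| ≤ M * |g r - β| := hL
          _ ≤ M * (C1 * r⁻¹) := mul_le_mul_of_nonneg_left hε hM0
      have u2 : ((N:ℝ)-1)/r = ((N:ℝ)-1) * r⁻¹ := by ring
      have hNr : (0:ℝ) ≤ ((N:ℝ)-1)/r := div_nonneg (by linarith only [hN1]) hr0.le
      calc ((N:ℝ)-1)/r * |g r ^ (p-1) - β ^ (p-1)| ≤ ((N:ℝ)-1)/r * (M * (C1 * r⁻¹)) :=
            mul_le_mul_of_nonneg_left u1 hNr
        _ = ((N:ℝ)-1) * (M * C1) * (r⁻¹ * r⁻¹) := by rw [u2]; ring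
        _ ≤ ((N:ℝ)-1) * (M * C1) * r ^ (-(2*δ+1)) := mul_le_mul_of_nonneg_left hb2
            (mul_nonneg (by linarith only [hN1]) (mul_nonneg hM0 hC10))
    have bz : |z| ≤ |Q₀ * γ| * 2 * r ^ (-(2*δ+1)) := by
      rw [hzdef, abs_div, abs_of_pos hhpos, abs_mul, hb5, abs_of_pos hP0]
      rw [div_le_iff₀ hhpos]
      have hnn : (0:ℝ) ≤ |Q₀ * γ| * r ^ (-(2*δ+1)) := by positivity
      nlinarith only [hnn, hh1]
    have hfin := tri.trans (by linarith only [bw, bx, by', bz] : |w| + |x| + |y| + |z|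
        ≤ ((p-1) * (K * C1^2) + (p-1) * (Mg * C2) + ((N:ℝ)-1) * (M * C1) + |Q₀ * γ| * 2)
          * r ^ (-(2*δ+1)))
    exact hfin
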